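/- For every finite simple graph G, the number of maximal independent sets of G is at most 2^β(G), where β(G) is the vertex covering number of G. -/

import Mathlib

variable {V : Type*}

/-- `S` is an independent set of `G`: no two vertices of `S` are adjacent. -/
def IsIndepSet (G : SimpleGraph V) (S : Set V) : Prop :=
  ∀ ⦃u v : V⦄, u ∈ S → v ∈ S → ¬ G.Adj u v

/-- `S` is a maximal independent set of `G`. -/
def IsMaxIndepSet (G : SimpleGraph V) (S : Set V) : Prop :=
  IsIndepSet G S ∧ ∀ T : Set V, IsIndepSet G T → S ⊆ T → S = T

/-- `m(G)`: the number of maximal independent sets of `G`. -/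
noncomputable def numMaxIndep (G : SimpleGraph V) : ℕ :=
  {S : Set V | IsMaxIndepSet G S}.ncard

/-- `C` is a vertex cover of `G`: every edge has at least one endpoint in `C`. -/
def IsVertexCover (G : SimpleGraph V) (C : Set V) : Prop :=
  ∀ ⦃u v : V⦄, G.Adj u v → u ∈ C ∨ v ∈ C

/-- `β(G)`: the minimum size of a vertex cover of `G`. -/
noncomputable def coverNumber (G : SimpleGraph V) : ℕ :=
  sInf {n : ℕ | ∃ C : Set V, IsVertexCover G C ∧ C.ncard = n}

/-- `M` is a matching of `G`: a set of edges of `G`, pairwise sharing no vertex. -/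
def IsMatching (G : SimpleGraph V) (M : Set (Sym2 V)) : Prop :=
  M ⊆ G.edgeSet ∧ ∀ e ∈ M, ∀ f ∈ M, e ≠ f → ∀ v : V, v ∈ e → v ∉ f

/-- `M` is an induced matching of `G`: a matching such that no two distinct
edges of `M` are joined by an edge of `G`. -/
def IsInducedMatching (G : SimpleGraph V) (M : Set (Sym2 V)) : Prop :=
  IsMatching G M ∧ ∀ e ∈ M, ∀ f ∈ M, e ≠ f → ∀ u v : V, u ∈ e → v ∈ f → ¬ G.Adj u v

/-- `ν(G)`: the maximum size of a matching of `G`. -/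
noncomputable def matchingNumber (G : SimpleGraph V) : ℕ :=
  sSup {n : ℕ | ∃ M : Set (Sym2 V), IsMatching G M ∧ M.ncard = n}

/-- `ν₀(G)`: the maximum size of an induced matching of `G`. -/
noncomputable def inducedMatchingNumber (G : SimpleGraph V) : ℕ :=
  sSup {n : ℕ | ∃ M : Set (Sym2 V), IsInducedMatching G M ∧ M.ncard = n}

/-- `G` is bipartite: the vertices split into two sides with every edge crossing. -/
def IsBipartite (G : SimpleGraph V) : Prop :=
  ∃ A : Set V, ∀ ⦃u v : V⦄, G.Adj u v → (u ∈ A ↔ v ∉ A)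

/-- For every finite simple graph `G`, `m(G) ≤ 2 ^ β(G)`. -/
lemma ncard_powerset_aux {α : Type*} (C : Set α) (hC : C.Finite) :
    (𝒫 C).ncard = 2 ^ C.ncard := by
  have := hC.fintype
  rw [← Nat.card_coe_set_eq, Nat.card_congr (Equiv.Set.powerset C),
    Nat.card_eq_fintype_card, Fintype.card_set, ← Nat.card_coe_set_eq,
    Nat.card_eq_fintype_card]

theorem numMaxIndep_le_two_pow_coverNumber [Fintype V] (G : SimpleGraph V) :
    numMaxIndep G ≤ 2 ^ coverNumber G := by
  classical
  have hne : {n : ℕ | ∃ C : Set V, IsVertexCover G C ∧ C.ncard = n}.Nonempty :=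
    ⟨(Set.univ : Set V).ncard, Set.univ, fun u v _ => Or.inl (Set.mem_univ u), rfl⟩
  obtain ⟨C, hC, hCcard⟩ := Nat.sInf_mem hne
  -- key: a maximal independent set is determined by its intersection with C
  have key : ∀ S : Set V, IsMaxIndepSet G S → ∀ v : V, v ∉ C →
      (v ∈ S ↔ ∀ u ∈ S ∩ C, ¬ G.Adj v u) := by
    intro S hS v hvC
    constructor
    · intro hvS u hu hadj
      exact hS.1 hvS hu.1 hadj
    · intro h
      by_contra hvS
      have hindep : IsIndepSet G (S ∪ {v}) := by
        intro a b ha hb hab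
        rcases ha with ha | ha
        · rcases hb with hb | hb
          · exact hS.1 ha hb hab
          · rw [Set.mem_singleton_iff] at hb; subst hb
            rcases hC hab with h1 | h1
            · exact h a ⟨ha, h1⟩ hab.symm
            · exact hvC h1
        · rw [Set.mem_singleton_iff] at ha; subst ha
          rcases hb with hb | hb
          · rcases hC hab with h1 | h1
            · exact hvC h1
            · exact h b ⟨hb, h1⟩ hab
          · rw [Set.mem_singleton_iff] at hb; subst hb
            exact (G.loopless.irrefl _) hab
      have := hS.2 (S ∪ {v}) hindep Set.subset_union_left
      exact hvS (this ▸ Set.mem_union_right S rfl : v ∈ S)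
  have hinj : Set.InjOn (fun S => S ∩ C) {S : Set V | IsMaxIndepSet G S} := by
    intro S1 h1 S2 h2 heq
    simp only [Set.mem_setOf_eq] at h1 h2
    ext v
    by_cases hvC : v ∈ C
    · constructor
      · intro hv
        have : v ∈ S1 ∩ C := ⟨hv, hvC⟩
        rw [show S1 ∩ C = S2 ∩ C from heq] at this
        exact this.1
      · intro hv
        have : v ∈ S2 ∩ C := ⟨hv, hvC⟩
        rw [← show S1 ∩ C = S2 ∩ C from heq] at this
        exact this.1
    · rw [key S1 h1 v hvC, key S2 h2 v hvC,
        show S1 ∩ C = S2 ∩ C from heq]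
  have hmaps : ∀ S ∈ {S : Set V | IsMaxIndepSet G S}, S ∩ C ∈ 𝒫 C :=
    fun S _ => Set.inter_subset_right
  have hfin : (𝒫 C).Finite := (Set.toFinite C).powerset
  calc numMaxIndep G ≤ (𝒫 C).ncard :=
        Set.ncard_le_ncard_of_injOn _ hmaps hinj hfin
    _ = 2 ^ C.ncard := ncard_powerset_aux C (Set.toFinite C)
    _ = 2 ^ coverNumber G := by rw [hCcard]; rfl
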